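/- For x = (x₁₁,x₁₂,x₂₁,x₂₂) ∈ k⁴ \ {0}, there exist elements a in the k-linear span of {p₁,p₂} and b in the k-linear span of {q₁,q₂} such that x₁₁[p₁,q₁] + x₁₂[p₁,q₂] + x₂₁[p₂,q₁] + x₂₂[p₂,q₂] = [a,b] in A*B if and only if x₁₁x₂₂ = x₁₂x₂₁. -/

import Mathlib

open scoped TensorProduct

/-- A two-element family of types, used to form binary free products. -/
def fam (A B : Type) : Bool → Type
  | true => A
  | false => B

instance famSemiring (A B : Type) [Semiring A] [Semiring B] : ∀ b, Semiring (fam A B b)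
  | true => ‹Semiring A›
  | false => ‹Semiring B›

instance famAlgebra (k A B : Type) [CommSemiring k] [Semiring A] [Semiring B]
    [Algebra k A] [Algebra k B] : ∀ b, Algebra k (fam A B b)
  | true => ‹Algebra k A›
  | false => ‹Algebra k B›

/-- The free product (coproduct in the category of unital associative `k`-algebras)
`A * B` of two `k`-algebras. -/
abbrev FP (k A B : Type) [CommSemiring k] [Semiring A] [Semiring B]
    [Algebra k A] [Algebra k B] : Type :=
  LinearAlgebra.FreeProduct k (fam A B)

/-- The canonical map `A →ₐ[k] A * B`. -/
noncomputable def inl (k A B : Type) [CommSemiring k] [Semiring A] [Semiring B]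
    [Algebra k A] [Algebra k B] : A →ₐ[k] FP k A B :=
  LinearAlgebra.FreeProduct.ι k (fam A B) true

/-- The canonical map `B →ₐ[k] A * B`. -/
noncomputable def inr (k A B : Type) [CommSemiring k] [Semiring A] [Semiring B]
    [Algebra k A] [Algebra k B] : B →ₐ[k] FP k A B :=
  LinearAlgebra.FreeProduct.ι k (fam A B) false

/-- The image in `A*B` of the `i`-th standard primitive idempotent of `A = k^⊕3`. -/
noncomputable def pgen (k : Type) [Field k] (i : Fin 3) : FP k (Fin 3 → k) (Fin 3 → k) :=
  inl k (Fin 3 → k) (Fin 3 → k) (Pi.single i 1)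

/-- The image in `A*B` of the `i`-th standard primitive idempotent of `B = k^⊕3`. -/
noncomputable def qgen (k : Type) [Field k] (i : Fin 3) : FP k (Fin 3 → k) (Fin 3 → k) :=
  inr k (Fin 3 → k) (Fin 3 → k) (Pi.single i 1)


noncomputable def tripleRingHom {k : Type} [Field k] {C : Type} [Ring C] [Algebra k C]
    (e : Fin 3 → C) (h1 : e 0 + e 1 + e 2 = 1)
    (ho : ∀ i j, e i * e j = if i = j then e i else 0) :
    (Fin 3 → k) →+* C where
  toFun f := ∑ i, f i • e i
  map_one' := by simp [Fin.sum_univ_three, h1]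
  map_mul' f g := by
    rw [Finset.sum_mul_sum]
    simp only [smul_mul_assoc, mul_smul_comm, ho, smul_ite, smul_zero]
    simp [Finset.sum_ite_eq, mul_comm]
    simp [smul_smul, mul_comm]
  map_zero' := by simp
  map_add' f g := by simp [add_smul, Finset.sum_add_distrib]

noncomputable def tripleHom {k : Type} [Field k] {C : Type} [Ring C] [Algebra k C]
    (e : Fin 3 → C) (h1 : e 0 + e 1 + e 2 = 1)
    (ho : ∀ i j, e i * e j = if i = j then e i else 0) :
    (Fin 3 → k) →ₐ[k] C :=
  AlgHom.mk' (tripleRingHom e h1 ho) (fun c f => by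
    simp only [tripleRingHom, RingHom.coe_mk, MonoidHom.coe_mk, OneHom.coe_mk]
    rw [Finset.smul_sum]
    simp [smul_smul])

lemma tripleHom_apply {k : Type} [Field k] {C : Type} [Ring C] [Algebra k C]
    (e : Fin 3 → C) (h1 : e 0 + e 1 + e 2 = 1)
    (ho : ∀ i j, e i * e j = if i = j then e i else 0) (f : Fin 3 → k) :
    tripleHom e h1 ho f = ∑ i, f i • e i := rfl

@[simp] lemma tripleHom_single {k : Type} [Field k] {C : Type} [Ring C] [Algebra k C]
    (e : Fin 3 → C) (h1 : e 0 + e 1 + e 2 = 1)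
    (ho : ∀ i j, e i * e j = if i = j then e i else 0) (i : Fin 3) :
    tripleHom (k := k) e h1 ho (Pi.single i 1) = e i := by
  rw [tripleHom_apply]
  simp [Pi.single_apply, ite_smul, Finset.sum_ite_eq']

open Matrix in
noncomputable def pfam (k : Type) [Field k] (i : Fin 2) : Fin 3 → Matrix (Fin 2) (Fin 2) k :=
  ![![!![1,0;0,0], 0, !![0,0;0,1]], ![0, !![1,0;0,0], !![0,0;0,1]]] i

open Matrix in
noncomputable def qfam (k : Type) [Field k] (j : Fin 2) : Fin 3 → Matrix (Fin 2) (Fin 2) k :=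
  ![![!![1,0;1,0], 0, !![0,0;-1,1]], ![0, !![1,0;1,0], !![0,0;-1,1]]] j

lemma hp1 (k : Type) [Field k] (i : Fin 2) : pfam k i 0 + pfam k i 1 + pfam k i 2 = 1 := by
  fin_cases i <;> · ext a b; fin_cases a <;> fin_cases b <;> norm_num [pfam, Matrix.cons_val_two, Matrix.tail_cons, Matrix.head_cons]

lemma hq1 (k : Type) [Field k] (j : Fin 2) : qfam k j 0 + qfam k j 1 + qfam k j 2 = 1 := by
  fin_cases j <;> · ext a b; fin_cases a <;> fin_cases b <;> norm_num [qfam, Matrix.cons_val_two, Matrix.tail_cons, Matrix.head_cons]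

lemma hpo (k : Type) [Field k] (i : Fin 2) :
    ∀ l m, pfam k i l * pfam k i m = if l = m then pfam k i l else 0 := by
  intro l m
  fin_cases i <;> fin_cases l <;> fin_cases m <;>
    norm_num [pfam, Matrix.mul_fin_two, Fin.ext_iff] <;>
    · ext a; fin_cases a <;> simp <;> rename_i b <;> fin_cases b <;> simp

lemma hqo (k : Type) [Field k] (j : Fin 2) :
    ∀ l m, qfam k j l * qfam k j m = if l = m then qfam k j l else 0 := by
  intro l m
  fin_cases j <;> fin_cases l <;> fin_cases m <;>
    norm_num [qfam, Matrix.mul_fin_two, Fin.ext_iff] <;>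
    · ext a; fin_cases a <;> simp <;> rename_i b <;> fin_cases b <;> simp

noncomputable def fammaps (k : Type) [Field k] (i j : Fin 2) :
    {b : Bool} → fam (Fin 3 → k) (Fin 3 → k) b →ₐ[k] Matrix (Fin 2) (Fin 2) k :=
  fun {b} => match b with
  | true => tripleHom (pfam k i) (hp1 k i) (hpo k i)
  | false => tripleHom (qfam k j) (hq1 k j) (hqo k j)

noncomputable def phi (k : Type) [Field k] (i j : Fin 2) :
    FP k (Fin 3 → k) (Fin 3 → k) →ₐ[k] Matrix (Fin 2) (Fin 2) k :=
  LinearAlgebra.FreeProduct.lift k (fam (Fin 3 → k) (Fin 3 → k)) (fammaps k i j)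

@[simp] lemma phi_pgen (k : Type) [Field k] (i j : Fin 2) (l : Fin 3) :
    phi k i j (pgen k l) = pfam k i l := by
  have h := LinearAlgebra.FreeProduct.lift_comp_ι k (fam (Fin 3 → k) (Fin 3 → k))
    (B := Matrix (Fin 2) (Fin 2) k) (maps := fammaps k i j) (i := true)
  have h2 := AlgHom.congr_fun h (Pi.single l 1 : Fin 3 → k)
  exact h2.trans (tripleHom_single (pfam k i) (hp1 k i) (hpo k i) l)

@[simp] lemma phi_qgen (k : Type) [Field k] (i j : Fin 2) (l : Fin 3) :
    phi k i j (qgen k l) = qfam k j l := by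
  have h := LinearAlgebra.FreeProduct.lift_comp_ι k (fam (Fin 3 → k) (Fin 3 → k))
    (B := Matrix (Fin 2) (Fin 2) k) (maps := fammaps k i j) (i := false)
  have h2 := AlgHom.congr_fun h (Pi.single l 1 : Fin 3 → k)
  exact h2.trans (tripleHom_single (qfam k j) (hq1 k j) (hqo k j) l)

theorem statement8 (k : Type) [Field k] [IsAlgClosed k] [CharZero k]
    (x : Fin 2 × Fin 2 → k) (hx : x ≠ 0) :
    (∃ a ∈ Submodule.span k {pgen k 0, pgen k 1},
      ∃ b ∈ Submodule.span k {qgen k 0, qgen k 1},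
        (∑ ij : Fin 2 × Fin 2, x ij •
          (pgen k ij.1.castSucc * qgen k ij.2.castSucc
            - qgen k ij.2.castSucc * pgen k ij.1.castSucc)) = a * b - b * a)
    ↔ x (0, 0) * x (1, 1) = x (0, 1) * x (1, 0) := by
  constructor
  · rintro ⟨a, ha, b, hb, h⟩
    rw [Submodule.mem_span_pair] at ha hb
    obtain ⟨α0, α1, rfl⟩ := ha
    obtain ⟨β0, β1, rfl⟩ := hb
    have key : ∀ i j : Fin 2, x (i, j) = ![α0, α1] i * ![β0, β1] j := by
      intro i j
      have h2 := congrArg (fun z => (phi k i j z) 1 0) h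
      simp only [map_sum, map_smul, map_sub, map_mul, map_add, phi_pgen, phi_qgen] at h2
      fin_cases i <;> fin_cases j <;>
      · simp only [Fintype.sum_prod_type, Fin.sum_univ_two, Fin.castSucc_zero, Fin.castSucc_one,
          pfam, qfam, Matrix.cons_val_zero, Matrix.cons_val_one, Matrix.head_cons,
          Matrix.mul_fin_two, Matrix.smul_apply, Matrix.sub_apply, Matrix.add_apply,
          Matrix.zero_apply, mul_zero, zero_mul, Matrix.mul_zero, Matrix.zero_mul,
          smul_zero, sub_zero, zero_sub, add_zero, zero_add, smul_eq_mul,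
          Matrix.smul_mul, Matrix.mul_smul, one_mul] at h2
        norm_num [Matrix.smul_apply] at h2 ⊢
        linear_combination h2
    have k00 := key 0 0
    have k01 := key 0 1
    have k10 := key 1 0
    have k11 := key 1 1
    simp only [Matrix.cons_val_zero, Matrix.cons_val_one, Matrix.head_cons] at k00 k01 k10 k11
    rw [k00, k01, k10, k11]
    ring
  · intro hdet
    have hfac : ∃ α0 α1 β0 β1 : k, ∀ i j : Fin 2, x (i, j) = ![α0, α1] i * ![β0, β1] j := by
      by_cases h00 : x (0, 0) = 0
      · by_cases h01 : x (0, 1) = 0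
        · refine ⟨0, 1, x (1, 0), x (1, 1), ?_⟩
          have e00 : x (0, 0) = 0 * x (1, 0) := by rw [zero_mul]; exact h00
          have e01 : x (0, 1) = 0 * x (1, 1) := by rw [zero_mul]; exact h01
          have e10 : x (1, 0) = 1 * x (1, 0) := (one_mul _).symm
          have e11 : x (1, 1) = 1 * x (1, 1) := (one_mul _).symm
          intro i j
          fin_cases i <;> fin_cases j <;>
            simp only [Fin.mk_zero, Fin.mk_one, Matrix.cons_val_zero, Matrix.cons_val_one,
              Matrix.head_cons]
          exacts [e00, e01, e10, e11]
        · have h10 : x (1, 0) = 0 := by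
            rcases mul_eq_zero.1 (by rw [← hdet, h00, zero_mul] :
              x (0, 1) * x (1, 0) = 0) with hc | hc
            · exact absurd hc h01
            · exact hc
          refine ⟨x (0, 1), x (1, 1), 0, 1, ?_⟩
          have e00 : x (0, 0) = x (0, 1) * 0 := by rw [mul_zero]; exact h00
          have e01 : x (0, 1) = x (0, 1) * 1 := (mul_one _).symm
          have e10 : x (1, 0) = x (1, 1) * 0 := by rw [mul_zero]; exact h10
          have e11 : x (1, 1) = x (1, 1) * 1 := (mul_one _).symm
          intro i j
          fin_cases i <;> fin_cases j <;>
            simp only [Fin.mk_zero, Fin.mk_one, Matrix.cons_val_zero, Matrix.cons_val_one,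
              Matrix.head_cons]
          exacts [e00, e01, e10, e11]
      · refine ⟨x (0, 0), x (1, 0), 1, x (0, 1) / x (0, 0), ?_⟩
        have e00 : x (0, 0) = x (0, 0) * 1 := (mul_one _).symm
        have e01 : x (0, 1) = x (0, 0) * (x (0, 1) / x (0, 0)) := by
          rw [mul_comm, div_mul_cancel₀ _ h00]
        have e10 : x (1, 0) = x (1, 0) * 1 := (mul_one _).symm
        have e11 : x (1, 1) = x (1, 0) * (x (0, 1) / x (0, 0)) := by
          rw [← mul_div_assoc, eq_div_iff h00]
          linear_combination hdet
        intro i j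
        fin_cases i <;> fin_cases j <;>
          simp only [Fin.mk_zero, Fin.mk_one, Matrix.cons_val_zero, Matrix.cons_val_one,
            Matrix.head_cons]
        exacts [e00, e01, e10, e11]
    obtain ⟨α0, α1, β0, β1, hf⟩ := hfac
    refine ⟨α0 • pgen k 0 + α1 • pgen k 1, Submodule.mem_span_pair.2 ⟨α0, α1, rfl⟩,
      β0 • qgen k 0 + β1 • qgen k 1, Submodule.mem_span_pair.2 ⟨β0, β1, rfl⟩, ?_⟩
    rw [Fintype.sum_prod_type]
    simp only [Fin.sum_univ_two, hf, Fin.castSucc_zero, Fin.castSucc_one,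
      Matrix.cons_val_zero, Matrix.cons_val_one, Matrix.head_cons]
    simp only [mul_add, add_mul, mul_sub, sub_mul, smul_sub, smul_add,
      smul_mul_assoc, mul_smul_comm, smul_smul]
    module
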